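/- Let k, ℓ, m be positive integers. Let a and c be equicorrelational k-ary sequences of length ℓ, and let b and d be equicorrelational k-ary sequences of length m. Then f(z) = a(z^m)·b(z) and g(z) = c(z^m)·d(z) are equicorrelational k-ary sequences of length ℓ·m. Furthermore, f is trivially equicorrelational to g if and only if at least one of the following holds: (i) a is a ℂ[z,z⁻¹]-associate of c and b is a ℂ[z,z⁻¹]-associate of d; or (ii) a is a ℂ[z,z⁻¹]-associate of c̄ and b is a ℂ[z,z⁻¹]-associate of d̄. In particular, if a is nontrivially equicorrelational to c or b is nontrivially equicorrelational to d, then f is nontrivially equicorrelational to g. -/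

import Mathlib

open LaurentPolynomial
open scoped Classical

/-- The length of a Laurent polynomial: 1 plus the difference between the maximal and
minimal exponents occurring with nonzero coefficient; the length of 0 is 0. -/
noncomputable def len {F : Type*} [Field F] (f : LaurentPolynomial F) : ℤ :=
  if h : f = 0 then 0
  else f.coeff.support.max' (Finsupp.support_nonempty_iff.mpr
      (fun hc => h (congrArg AddMonoidAlgebra.ofCoeff hc)))
     - f.coeff.support.min' (Finsupp.support_nonempty_iff.mpr
      (fun hc => h (congrArg AddMonoidAlgebra.ofCoeff hc))) + 1

/-- Substitution `f(z) ↦ f(z^m)`: the image of `f` under the ring homomorphism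
sending `z` to `z^m`. -/
noncomputable def subst {F : Type*} [Field F] (m : ℤ) (f : LaurentPolynomial F) :
    LaurentPolynomial F :=
  AddMonoidAlgebra.mapDomainRingHom F (AddMonoidHom.mulLeft m) f

/-- The subring `F[z,z⁻¹]` of `E[z,z⁻¹]` consisting of Laurent polynomials all of whose
coefficients lie in the subfield `F` of `E`. -/
noncomputable def LRing {E : Type*} [Field E] (F : Subfield E) :
    Subring (LaurentPolynomial E) where
  carrier := {f : LaurentPolynomial E | ∀ n : ℤ, f.coeff n ∈ F}
  zero_mem' := fun n => F.zero_mem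
  one_mem' := by
    intro n
    rw [AddMonoidAlgebra.one_def]
    show (Finsupp.single (0 : ℤ) (1 : E)) n ∈ F
    rw [Finsupp.single_apply]
    split_ifs
    · exact F.one_mem
    · exact F.zero_mem
  add_mem' := by
    intro f g hf hg n
    rw [AddMonoidAlgebra.coeff_add, Finsupp.add_apply]
    exact add_mem (hf n) (hg n)
  neg_mem' := by
    intro f hf n
    rw [AddMonoidAlgebra.coeff_neg, Finsupp.neg_apply]
    exact neg_mem (hf n)
  mul_mem' := by
    intro f g hf hg n
    rw [AddMonoidAlgebra.coeff_mul]
    refine sum_mem fun a ha => sum_mem fun b hb => ?_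
    dsimp only
    split_ifs
    · exact mul_mem (hf a) (hg b)
    · exact zero_mem F

/-- The conjugate of `f(z) = Σ f_j z^j`, namely `f̄(z) = Σ conj(f_j) z^{-j}`. -/
noncomputable def lconj (f : LaurentPolynomial ℂ) : LaurentPolynomial ℂ :=
  AddMonoidAlgebra.ofCoeff
    (Finsupp.equivMapDomain (Equiv.neg ℤ) (Finsupp.mapRange (starRingEnd ℂ) (map_zero _) f.coeff))

/-- `f` and `g` are equicorrelational: `f·f̄ = c·g·ḡ` for some positive real `c`. -/
def Equicorrelational (f g : LaurentPolynomial ℂ) : Prop :=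
  ∃ c : ℝ, 0 < c ∧ f * lconj f = C (c : ℂ) * (g * lconj g)

/-- `f` and `g` are trivially equicorrelational: `g` is a `ℂ[z,z⁻¹]`-associate of `f`
or of `f̄`. -/
def TrivEquicorrelational (f g : LaurentPolynomial ℂ) : Prop :=
  Associated g f ∨ Associated g (lconj f)

/-- A generalized palindrome: `f̄` is a `ℂ[z,z⁻¹]`-associate of `f`. -/
def GenPalindrome (f : LaurentPolynomial ℂ) : Prop :=
  Associated (lconj f) f

/-- `g` is an `F[z,z⁻¹]`-associate of `f`: `g = u·f` for some unit `u` of the subring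
`F[z,z⁻¹]` of `ℂ[z,z⁻¹]`. -/
def FAssoc (F : Subfield ℂ) (g f : LaurentPolynomial ℂ) : Prop :=
  ∃ u : (LRing F)ˣ, g = ((u : LRing F) : LaurentPolynomial ℂ) * f

/-- The `F[z,z⁻¹]`-associate class of `f`. -/
def facl (F : Subfield ℂ) (f : LaurentPolynomial ℂ) : Set (LaurentPolynomial ℂ) :=
  {g | FAssoc F g f}

/-- The `F`-trivial equicorrelationality class of `f`: all elements of `F[z,z⁻¹]`
that are trivially equicorrelational to `f`. -/
def fte (F : Subfield ℂ) (f : LaurentPolynomial ℂ) : Set (LaurentPolynomial ℂ) :=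
  {g | g ∈ LRing F ∧ TrivEquicorrelational f g}

/-- A `k`-ary sequence: a Laurent polynomial whose support is a segment of consecutive
integers and whose nonzero coefficients are complex `k`-th roots of unity. -/
def IsKary (k : ℕ) (f : LaurentPolynomial ℂ) : Prop :=
  (∀ i j l : ℤ, i ≤ j → j ≤ l → f.coeff i ≠ 0 → f.coeff l ≠ 0 → f.coeff j ≠ 0) ∧
  ∀ n : ℤ, f.coeff n ≠ 0 → (f.coeff n) ^ k = 1

/-- A binary sequence: a Laurent polynomial whose support is a segment of consecutive
integers and whose nonzero coefficients all lie in `{1, -1}`. -/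
def IsBinary (f : LaurentPolynomial ℂ) : Prop :=
  (∀ i j l : ℤ, i ≤ j → j ≤ l → f.coeff i ≠ 0 → f.coeff l ≠ 0 → f.coeff j ≠ 0) ∧
  ∀ n : ℤ, f.coeff n ≠ 0 → f.coeff n = 1 ∨ f.coeff n = -1

noncomputable def mx (f : LaurentPolynomial ℂ) : ℤ :=
  if h : f = 0 then 0 else f.coeff.support.max' (Finsupp.support_nonempty_iff.mpr (fun hc => h (congrArg AddMonoidAlgebra.ofCoeff hc)))

noncomputable def mn (f : LaurentPolynomial ℂ) : ℤ :=
  if h : f = 0 then 0 else f.coeff.support.min' (Finsupp.support_nonempty_iff.mpr (fun hc => h (congrArg AddMonoidAlgebra.ofCoeff hc)))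

lemma len_eq {f : LaurentPolynomial ℂ} (hf : f ≠ 0) : len f = mx f - mn f + 1 := by
  rw [len, mx, mn, dif_neg hf, dif_neg hf, dif_neg hf]

lemma apply_mx_ne_zero {f : LaurentPolynomial ℂ} (hf : f ≠ 0) : f.coeff (mx f) ≠ 0 := by
  rw [mx, dif_neg hf]
  exact (f.coeff.mem_support_iff).mp (f.coeff.support.max'_mem _)

lemma apply_mn_ne_zero {f : LaurentPolynomial ℂ} (hf : f ≠ 0) : f.coeff (mn f) ≠ 0 := by
  rw [mn, dif_neg hf]
  exact (f.coeff.mem_support_iff).mp (f.coeff.support.min'_mem _)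

lemma le_mx {f : LaurentPolynomial ℂ} {n : ℤ} (h : f.coeff n ≠ 0) : n ≤ mx f := by
  have hf : f ≠ 0 := fun h0 => h (by rw [h0]; rfl)
  rw [mx, dif_neg hf]
  exact Finset.le_max' _ n (Finsupp.mem_support_iff.mpr h)

lemma mn_le {f : LaurentPolynomial ℂ} {n : ℤ} (h : f.coeff n ≠ 0) : mn f ≤ n := by
  have hf : f ≠ 0 := fun h0 => h (by rw [h0]; rfl)
  rw [mn, dif_neg hf]
  exact Finset.min'_le _ n (Finsupp.mem_support_iff.mpr h)

lemma mn_le_mx {f : LaurentPolynomial ℂ} (hf : f ≠ 0) : mn f ≤ mx f :=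
  mn_le (apply_mx_ne_zero hf)

/-- key: coefficient of product at a "uniquely decomposable" index -/
lemma mul_apply_unique (f g : LaurentPolynomial ℂ) (x y : ℤ)
    (h : ∀ x' ∈ f.coeff.support, ∀ y' ∈ g.coeff.support, x' + y' = x + y → x' = x ∧ y' = y) :
    (f * g).coeff (x + y) = f.coeff x * g.coeff y := by
  rw [AddMonoidAlgebra.coeff_mul, Finsupp.sum]
  by_cases hx : x ∈ f.coeff.support
  · by_cases hy : y ∈ g.coeff.support
    · rw [Finset.sum_eq_single x]
      · rw [Finsupp.sum, Finset.sum_eq_single y]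
        · rw [if_pos rfl]
        · intro y' hy' hne
          rw [if_neg]
          intro he
          exact hne (h x hx y' hy' he).2
        · intro hy'; exact absurd hy hy'
      · intro x' hx' hne
        rw [Finsupp.sum]
        refine Finset.sum_eq_zero fun y' hy' => ?_
        rw [if_neg]
        intro he
        exact hne (h x' hx' y' hy' he).1
      · intro hx'; exact absurd hx hx'
    · rw [Finsupp.notMem_support_iff.mp hy, mul_zero]
      refine Finset.sum_eq_zero fun x' hx' => ?_
      rw [Finsupp.sum]
      refine Finset.sum_eq_zero fun y' hy' => ?_
      rw [if_neg]
      intro he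
      exact hy ((h x' hx' y' hy' he).2 ▸ hy')
  · rw [Finsupp.notMem_support_iff.mp hx, zero_mul]
    refine Finset.sum_eq_zero fun x' hx' => ?_
    rw [Finsupp.sum]
    refine Finset.sum_eq_zero fun y' hy' => ?_
    rw [if_neg]
    intro he
    exact hx ((h x' hx' y' hy' he).1 ▸ hx')

lemma support_mul_mem {f g : LaurentPolynomial ℂ} {n : ℤ} (h : (f * g).coeff n ≠ 0) :
    ∃ x ∈ f.coeff.support, ∃ y ∈ g.coeff.support, n = x + y := by
  have := AddMonoidAlgebra.support_coeff_mul_subset f g (Finsupp.mem_support_iff.mpr h)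
  rw [Finset.mem_add] at this
  obtain ⟨x, hx, y, hy, hxy⟩ := this
  exact ⟨x, hx, y, hy, hxy.symm⟩

lemma mul_apply_mx {f g : LaurentPolynomial ℂ} :
    (f * g).coeff (mx f + mx g) = f.coeff (mx f) * g.coeff (mx g) := by
  refine mul_apply_unique f g _ _ fun x' hx' y' hy' he => ?_
  have h1 : x' ≤ mx f := le_mx (Finsupp.mem_support_iff.mp hx')
  have h2 : y' ≤ mx g := le_mx (Finsupp.mem_support_iff.mp hy')
  constructor <;> omega

lemma mul_apply_mn {f g : LaurentPolynomial ℂ} :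
    (f * g).coeff (mn f + mn g) = f.coeff (mn f) * g.coeff (mn g) := by
  refine mul_apply_unique f g _ _ fun x' hx' y' hy' he => ?_
  have h1 : mn f ≤ x' := mn_le (Finsupp.mem_support_iff.mp hx')
  have h2 : mn g ≤ y' := mn_le (Finsupp.mem_support_iff.mp hy')
  constructor <;> omega

lemma mx_mul {f g : LaurentPolynomial ℂ} (hf : f ≠ 0) (hg : g ≠ 0) :
    mx (f * g) = mx f + mx g := by
  have h1 : (f * g).coeff (mx f + mx g) ≠ 0 := by
    rw [mul_apply_mx]; exact mul_ne_zero (apply_mx_ne_zero hf) (apply_mx_ne_zero hg)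
  have hfg : f * g ≠ 0 := fun h0 => h1 (by rw [h0]; rfl)
  refine le_antisymm ?_ (le_mx h1)
  obtain ⟨x, hx, y, hy, hxy⟩ := support_mul_mem (apply_mx_ne_zero hfg)
  have := le_mx (Finsupp.mem_support_iff.mp hx)
  have := le_mx (Finsupp.mem_support_iff.mp hy)
  omega

lemma mn_mul {f g : LaurentPolynomial ℂ} (hf : f ≠ 0) (hg : g ≠ 0) :
    mn (f * g) = mn f + mn g := by
  have h1 : (f * g).coeff (mn f + mn g) ≠ 0 := by
    rw [mul_apply_mn]; exact mul_ne_zero (apply_mn_ne_zero hf) (apply_mn_ne_zero hg)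
  have hfg : f * g ≠ 0 := fun h0 => h1 (by rw [h0]; rfl)
  refine le_antisymm (mn_le h1) ?_
  obtain ⟨x, hx, y, hy, hxy⟩ := support_mul_mem (apply_mn_ne_zero hfg)
  have := mn_le (Finsupp.mem_support_iff.mp hx)
  have := mn_le (Finsupp.mem_support_iff.mp hy)
  omega

lemma mul_ne_zero' {f g : LaurentPolynomial ℂ} (hf : f ≠ 0) (hg : g ≠ 0) : f * g ≠ 0 := by
  intro h0
  have h1 : (f * g).coeff (mx f + mx g) ≠ 0 := by
    rw [mul_apply_mx]; exact mul_ne_zero (apply_mx_ne_zero hf) (apply_mx_ne_zero hg)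
  rw [h0] at h1; exact h1 rfl

lemma len_mul {f g : LaurentPolynomial ℂ} (hf : f ≠ 0) (hg : g ≠ 0) :
    len (f * g) = len f + len g - 1 := by
  rw [len_eq (mul_ne_zero' hf hg), len_eq hf, len_eq hg, mx_mul hf hg, mn_mul hf hg]
  ring

-- continuation: subst, units
lemma subst_apply_mul {m : ℤ} (hm : m ≠ 0) (f : LaurentPolynomial ℂ) (i : ℤ) :
    (subst m f).coeff (m * i) = f.coeff i := by
  have hinj : Function.Injective (fun x : ℤ => m * x) := fun x y h => by
    simpa using mul_left_cancel₀ hm h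
  exact Finsupp.mapDomain_apply hinj f.coeff i

lemma subst_apply_not_dvd {m : ℤ} (f : LaurentPolynomial ℂ) {p : ℤ} (h : ¬ m ∣ p) :
    (subst m f).coeff p = 0 := by
  refine Finsupp.mapDomain_of_notMem_range f.coeff p ?_
  rintro ⟨i, rfl⟩
  exact h ⟨i, rfl⟩

lemma subst_supp {m : ℤ} (hm : m ≠ 0) {f : LaurentPolynomial ℂ} {p : ℤ}
    (h : (subst m f).coeff p ≠ 0) : ∃ i, p = m * i ∧ f.coeff i ≠ 0 := by
  by_cases hd : m ∣ p
  · obtain ⟨i, rfl⟩ := hd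
    exact ⟨i, rfl, by rwa [subst_apply_mul hm] at h⟩
  · exact absurd (subst_apply_not_dvd f hd) h

lemma subst_ne_zero {m : ℤ} (hm : m ≠ 0) {f : LaurentPolynomial ℂ} (hf : f ≠ 0) :
    subst m f ≠ 0 := by
  intro h0
  apply hf
  ext i
  have := congrArg (fun g : LaurentPolynomial ℂ => g.coeff (m * i)) h0
  simpa [subst_apply_mul hm] using this

lemma mx_subst {m : ℤ} (hm : 0 < m) {f : LaurentPolynomial ℂ} (hf : f ≠ 0) :
    mx (subst m f) = m * mx f := by
  have hm' : m ≠ 0 := hm.ne'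
  refine le_antisymm ?_ ?_
  · obtain ⟨i, hp, hi⟩ := subst_supp hm' (apply_mx_ne_zero (subst_ne_zero hm' hf))
    rw [hp]
    exact mul_le_mul_of_nonneg_left (le_mx hi) hm.le
  · refine le_mx ?_
    rw [subst_apply_mul hm']
    exact apply_mx_ne_zero hf

lemma mn_subst {m : ℤ} (hm : 0 < m) {f : LaurentPolynomial ℂ} (hf : f ≠ 0) :
    mn (subst m f) = m * mn f := by
  have hm' : m ≠ 0 := hm.ne'
  refine le_antisymm ?_ ?_
  · refine mn_le ?_
    rw [subst_apply_mul hm']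
    exact apply_mn_ne_zero hf
  · obtain ⟨i, hp, hi⟩ := subst_supp hm' (apply_mn_ne_zero (subst_ne_zero hm' hf))
    rw [hp]
    exact mul_le_mul_of_nonneg_left (mn_le hi) hm.le

lemma len_subst {m : ℤ} (hm : 0 < m) {f : LaurentPolynomial ℂ} (hf : f ≠ 0) :
    len (subst m f) = m * (len f - 1) + 1 := by
  rw [len_eq (subst_ne_zero hm.ne' hf), len_eq hf, mx_subst hm hf, mn_subst hm hf]
  ring

-- monomial shift lemmas
noncomputable def sg (n : ℤ) (α : ℂ) : LaurentPolynomial ℂ := AddMonoidAlgebra.single n α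

lemma sg_apply (n : ℤ) (α : ℂ) (p : ℤ) : (sg n α).coeff p = if p = n then α else 0 := by
  rw [sg, AddMonoidAlgebra.coeff_single, Finsupp.single_apply]
  simp [eq_comm]

lemma single_mul_apply' (α : ℂ) (n : ℤ) (f : LaurentPolynomial ℂ) (p : ℤ) :
    (sg n α * f).coeff p = α * f.coeff (p - n) := by
  have := AddMonoidAlgebra.coeff_single_mul_apply f α n p
  rwa [show -n + p = p - n by ring] at this

lemma mul_single_apply' (f : LaurentPolynomial ℂ) (α : ℂ) (n : ℤ) (p : ℤ) :
    (f * sg n α).coeff p = f.coeff (p - n) * α := by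
  have := AddMonoidAlgebra.coeff_mul_single_apply f α n p
  rwa [← sub_eq_add_neg] at this

lemma isUnit_single {α : ℂ} (hα : α ≠ 0) (n : ℤ) :
    IsUnit (sg n α) := by
  rw [sg, LaurentPolynomial.single_eq_C_mul_T]
  exact ((IsUnit.map LaurentPolynomial.C (isUnit_iff_ne_zero.mpr hα))).mul (isUnit_T n)

lemma len_one : len (1 : LaurentPolynomial ℂ) = 1 := by
  have h1 : (1 : LaurentPolynomial ℂ) ≠ 0 := one_ne_zero
  have hx : mx (1 : LaurentPolynomial ℂ) = 0 := by
    refine le_antisymm ?_ (le_mx (by rw [show ((1:LaurentPolynomial ℂ).coeff 0) = 1 from Finsupp.single_eq_same]; exact one_ne_zero))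
    by_contra h
    push_neg at h
    have := apply_mx_ne_zero h1
    rw [show ((1:LaurentPolynomial ℂ).coeff (mx 1)) = 0 from Finsupp.single_eq_of_ne (by omega)] at this
    exact this rfl
  have hn : mn (1 : LaurentPolynomial ℂ) = 0 := by
    refine le_antisymm (mn_le (by rw [show ((1:LaurentPolynomial ℂ).coeff 0) = 1 from Finsupp.single_eq_same]; exact one_ne_zero)) ?_
    by_contra h
    push_neg at h
    have := apply_mn_ne_zero h1
    rw [show ((1:LaurentPolynomial ℂ).coeff (mn 1)) = 0 from Finsupp.single_eq_of_ne (by omega)] at this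
    exact this rfl
  rw [len_eq h1, hx, hn]
  norm_num

lemma unit_form {u : LaurentPolynomial ℂ} (hu : IsUnit u) :
    ∃ (α : ℂ) (n : ℤ), α ≠ 0 ∧ u = sg n α := by
  obtain ⟨v, hv⟩ := isUnit_iff_exists_inv.mp hu
  have hu0 : u ≠ 0 := by rintro rfl; simp at hv
  have hv0 : v ≠ 0 := by rintro rfl; simp at hv
  have hlen : len u + len v - 1 = 1 := by rw [← len_mul hu0 hv0, hv, len_one]
  have h1 : mn u ≤ mx u := mn_le_mx hu0
  have h2 : mn v ≤ mx v := mn_le_mx hv0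
  have hlu : len u = 1 := by
    rw [len_eq hu0, len_eq hv0] at hlen; rw [len_eq hu0]; omega
  have hmm : mx u = mn u := by rw [len_eq hu0] at hlu; omega
  refine ⟨u.coeff (mx u), mx u, apply_mx_ne_zero hu0, ?_⟩
  ext p
  rw [sg_apply]
  rcases eq_or_ne p (mx u) with rfl | hp
  · rw [if_pos rfl]
  · rw [if_neg hp]
    by_contra h
    have := le_mx h
    have := mn_le h
    omega

lemma lconj_apply (f : LaurentPolynomial ℂ) (n : ℤ) :
    (lconj f).coeff n = (starRingEnd ℂ) (f.coeff (-n)) := by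
  rfl

noncomputable def cmap (f : LaurentPolynomial ℂ) : LaurentPolynomial ℂ :=
  AddMonoidAlgebra.ofCoeff (Finsupp.mapRange (starRingEnd ℂ) (map_zero _) f.coeff)

lemma cmap_apply (f : LaurentPolynomial ℂ) (n : ℤ) : (cmap f).coeff n = (starRingEnd ℂ) (f.coeff n) := rfl

lemma cmap_mul (f g : LaurentPolynomial ℂ) : cmap (f * g) = cmap f * cmap g := by
  ext n
  rw [cmap_apply, AddMonoidAlgebra.coeff_mul, AddMonoidAlgebra.coeff_mul]
  rw [Finsupp.sum, Finsupp.sum, map_sum]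
  have hs : (cmap f).coeff.support = f.coeff.support :=
    Finsupp.support_mapRange_of_injective (map_zero _) f.coeff (starRingEnd ℂ).injective
  have hs' : (cmap g).coeff.support = g.coeff.support :=
    Finsupp.support_mapRange_of_injective (map_zero _) g.coeff (starRingEnd ℂ).injective
  rw [hs]
  refine Finset.sum_congr rfl fun x hx => ?_
  rw [Finsupp.sum, Finsupp.sum, map_sum, hs']
  refine Finset.sum_congr rfl fun y hy => ?_
  rw [apply_ite (starRingEnd ℂ), map_mul, map_zero, cmap_apply, cmap_apply]

lemma lconj_eq_hom (f : LaurentPolynomial ℂ) :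
    lconj f = AddMonoidAlgebra.mapDomainRingHom ℂ (negAddMonoidHom (α := ℤ)) (cmap f) := by
  rw [lconj, Finsupp.equivMapDomain_eq_mapDomain]
  rfl

lemma lconj_mul (f g : LaurentPolynomial ℂ) : lconj (f * g) = lconj f * lconj g := by
  rw [lconj_eq_hom, lconj_eq_hom, lconj_eq_hom, cmap_mul, map_mul]

lemma lconj_one : lconj (1 : LaurentPolynomial ℂ) = 1 := by
  rw [lconj_eq_hom]
  have : cmap 1 = 1 := by
    ext n
    rw [cmap_apply]
    rcases eq_or_ne n 0 with rfl | h
    · rw [show ((1 : LaurentPolynomial ℂ).coeff 0) = 1 from Finsupp.single_eq_same]; exact map_one _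
    · rw [show ((1 : LaurentPolynomial ℂ).coeff n) = 0 from Finsupp.single_eq_of_ne h]
      exact map_zero _
  rw [this, map_one]

lemma lconj_lconj (f : LaurentPolynomial ℂ) : lconj (lconj f) = f := by
  ext n; rw [lconj_apply, lconj_apply, neg_neg]; exact Complex.conj_conj _

lemma lconj_eq_zero {f : LaurentPolynomial ℂ} : lconj f = 0 ↔ f = 0 := by
  constructor
  · intro h
    ext n
    have := congrArg (fun g : LaurentPolynomial ℂ => g.coeff (-n)) h
    simp only [lconj_apply, neg_neg, AddMonoidAlgebra.coeff_zero, Finsupp.coe_zero, Pi.zero_apply] at this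
    simpa using congrArg (starRingEnd ℂ) this
  · rintro rfl; ext n; simp [lconj_apply]

-- block 4
lemma lconj_ne_zero_iff {f : LaurentPolynomial ℂ} {n : ℤ} :
    (lconj f).coeff n ≠ 0 ↔ f.coeff (-n) ≠ 0 := by
  rw [lconj_apply]
  simp

lemma mx_lconj {f : LaurentPolynomial ℂ} (hf : f ≠ 0) : mx (lconj f) = - mn f := by
  refine le_antisymm ?_ (le_mx (lconj_ne_zero_iff.mpr (by rw [neg_neg]; exact apply_mn_ne_zero hf)))
  have h := apply_mx_ne_zero (lconj_eq_zero.ne.mpr hf)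
  have := mn_le (lconj_ne_zero_iff.mp h)
  omega

lemma mn_lconj {f : LaurentPolynomial ℂ} (hf : f ≠ 0) : mn (lconj f) = - mx f := by
  refine le_antisymm (mn_le (lconj_ne_zero_iff.mpr (by rw [neg_neg]; exact apply_mx_ne_zero hf))) ?_
  have h := apply_mn_ne_zero (lconj_eq_zero.ne.mpr hf)
  have := le_mx (lconj_ne_zero_iff.mp h)
  omega

lemma len_lconj {f : LaurentPolynomial ℂ} (hf : f ≠ 0) : len (lconj f) = len f := by
  rw [len_eq (lconj_eq_zero.ne.mpr hf), len_eq hf, mx_lconj hf, mn_lconj hf]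
  ring

lemma isUnit_lconj {x : LaurentPolynomial ℂ} (hx : IsUnit x) : IsUnit (lconj x) := by
  obtain ⟨y, hy⟩ := isUnit_iff_exists_inv.mp hx
  exact isUnit_iff_exists_inv.mpr ⟨lconj y, by rw [← lconj_mul, hy, lconj_one]⟩

lemma assoc_lconj {x y : LaurentPolynomial ℂ} (h : Associated x y) :
    Associated (lconj x) (lconj y) := by
  obtain ⟨u, hu⟩ := h
  have h1 : IsUnit (lconj (u : LaurentPolynomial ℂ)) := isUnit_lconj u.isUnit
  exact ⟨h1.unit, by rw [IsUnit.unit_spec, ← lconj_mul, hu]⟩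

lemma lconj_subst {m : ℤ} (hm : m ≠ 0) (f : LaurentPolynomial ℂ) :
    lconj (subst m f) = subst m (lconj f) := by
  ext n
  rw [lconj_apply]
  by_cases hd : m ∣ n
  · obtain ⟨i, rfl⟩ := hd
    rw [show -(m * i) = m * (-i) by ring, subst_apply_mul hm, subst_apply_mul hm, lconj_apply]
  · rw [subst_apply_not_dvd _ hd, subst_apply_not_dvd _ (fun h => hd ((dvd_neg).mp h)), map_zero]

lemma subst_mul (m : ℤ) (f g : LaurentPolynomial ℂ) :
    subst m (f * g) = subst m f * subst m g :=
  map_mul (AddMonoidAlgebra.mapDomainRingHom ℂ (AddMonoidHom.mulLeft m)) f g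

lemma subst_C (m : ℤ) (x : ℂ) : subst m (C x) = C x := by
  have : (C x : LaurentPolynomial ℂ) = AddMonoidAlgebra.single 0 x := rfl
  rw [subst, this]
  have h2 : AddMonoidAlgebra.mapDomain (⇑(AddMonoidHom.mulLeft m)) (AddMonoidAlgebra.single (0:ℤ) x)
      = AddMonoidAlgebra.single (m * 0) x := AddMonoidAlgebra.mapDomain_single
  rw [show (AddMonoidAlgebra.mapDomainRingHom ℂ (AddMonoidHom.mulLeft m))
      (AddMonoidAlgebra.single (0:ℤ) x) = AddMonoidAlgebra.mapDomain (⇑(AddMonoidHom.mulLeft m))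
      (AddMonoidAlgebra.single (0:ℤ) x) from rfl, h2, mul_zero]

lemma sg_ne_zero {α : ℂ} (hα : α ≠ 0) (n : ℤ) : sg n α ≠ 0 := by
  intro h
  apply hα
  have := congrArg (fun g : LaurentPolynomial ℂ => g.coeff n) h
  simpa [sg_apply] using this

lemma mx_sg {α : ℂ} (hα : α ≠ 0) (n : ℤ) : mx (sg n α) = n := by
  refine le_antisymm ?_ (le_mx (by rw [sg_apply, if_pos rfl]; exact hα))
  have h := apply_mx_ne_zero (sg_ne_zero hα n)
  rw [sg_apply] at h
  by_contra hc
  rw [if_neg (by omega)] at h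
  exact h rfl

lemma mn_sg {α : ℂ} (hα : α ≠ 0) (n : ℤ) : mn (sg n α) = n := by
  refine le_antisymm (mn_le (by rw [sg_apply, if_pos rfl]; exact hα)) ?_
  have h := apply_mn_ne_zero (sg_ne_zero hα n)
  rw [sg_apply] at h
  by_contra hc
  rw [if_neg (by omega)] at h
  exact h rfl

lemma int_mul_eq_zero {m k d : ℤ} (hm : 0 < m) (h : m * k = d) (h1 : -m < d) (h2 : d < m) :
    k = 0 := by
  rcases lt_trichotomy k 0 with hk | hk | hk
  · nlinarith
  · exact hk
  · nlinarith

/-- key coefficient formula for `subst m a * b` -/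
lemma comp_apply {m : ℤ} (hm : 0 < m) (a b : LaurentPolynomial ℂ)
    (hbw : ∀ y, b.coeff y ≠ 0 → mn b ≤ y ∧ y < mn b + m) (i j : ℤ)
    (hj1 : mn b ≤ j) (hj2 : j < mn b + m) :
    (subst m a * b).coeff (m * i + j) = a.coeff i * b.coeff j := by
  have h := mul_apply_unique (subst m a) b (m * i) j ?_
  · rwa [subst_apply_mul hm.ne' a i] at h
  · intro x' hx' y' hy' he
    obtain ⟨i', hi', _⟩ := subst_supp hm.ne' (Finsupp.mem_support_iff.mp hx')
    have hy := hbw y' (Finsupp.mem_support_iff.mp hy')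
    subst hi'
    have hd : m * i' - m * i = j - y' := by linarith
    have hd2 : m * (i' - i) = j - y' := by rw [mul_sub]; exact hd
    have hb1 : -m < j - y' := by linarith [hy.1, hy.2, hj1, hj2]
    have hb2 : j - y' < m := by linarith [hy.1, hy.2, hj1, hj2]
    have h0 : i' - i = 0 := int_mul_eq_zero hm hd2 hb1 hb2
    have h3 : j - y' = 0 := by rw [← hd2, h0, mul_zero]
    constructor
    · rw [show i' = i from by omega]
    · omega

lemma comp_apply' {m : ℤ} (hm : 0 < m) (a b : LaurentPolynomial ℂ)
    (hbw : ∀ y, b.coeff y ≠ 0 → mn b ≤ y ∧ y < mn b + m) (n : ℤ) :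
    (subst m a * b).coeff n = a.coeff ((n - mn b) / m) * b.coeff (mn b + (n - mn b) % m) := by
  have hdm := Int.mul_ediv_add_emod (n - mn b) m
  have hr0 : 0 ≤ (n - mn b) % m := Int.emod_nonneg _ hm.ne'
  have hrm : (n - mn b) % m < m := Int.emod_lt_of_pos _ hm
  have hn : n = m * ((n - mn b) / m) + (mn b + (n - mn b) % m) := by linarith
  conv_lhs => rw [hn]
  exact comp_apply hm a b hbw ((n - mn b) / m) (mn b + (n - mn b) % m) (by omega) (by omega)

-- helpers
lemma len_zero : len (0 : LaurentPolynomial ℂ) = 0 := by rw [len, dif_pos rfl]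

lemma ne_zero_of_len {f : LaurentPolynomial ℂ} {l : ℤ} (h : len f = l) (hl : 0 < l) :
    f ≠ 0 := by
  rintro rfl
  rw [len_zero] at h
  omega

lemma window_of_len {m : ℤ} {b : LaurentPolynomial ℂ} (hb0 : b ≠ 0) (hbm : len b = m) :
    ∀ y, b.coeff y ≠ 0 → mn b ≤ y ∧ y < mn b + m := by
  intro y hy
  have h1 := mn_le hy
  have h2 := le_mx hy
  have h3 := len_eq hb0
  omega

lemma comp_isKary {k : ℕ} {m : ℤ} (hm : 0 < m) {a b : LaurentPolynomial ℂ}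
    (ha0 : a ≠ 0) (hb0 : b ≠ 0) (hak : IsKary k a) (hbk : IsKary k b) (hbm : len b = m) :
    IsKary k (subst m a * b) := by
  have hbw := window_of_len hb0 hbm
  have full : ∀ r : ℤ, 0 ≤ r → r < m → b.coeff (mn b + r) ≠ 0 := by
    intro r h1 h2
    have h3 := len_eq hb0
    refine hbk.1 (mn b) (mn b + r) (mx b) (by omega) (by omega)
      (apply_mn_ne_zero hb0) (apply_mx_ne_zero hb0)
  constructor
  · intro i j l hij hjl hi hl
    rw [comp_apply' hm a b hbw] at hi hl ⊢
    have hi' : a.coeff ((i - mn b) / m) ≠ 0 := left_ne_zero_of_mul hi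
    have hl' : a.coeff ((l - mn b) / m) ≠ 0 := left_ne_zero_of_mul hl
    have hq1 : (i - mn b) / m ≤ (j - mn b) / m := Int.ediv_le_ediv hm (by omega)
    have hq2 : (j - mn b) / m ≤ (l - mn b) / m := Int.ediv_le_ediv hm (by omega)
    exact mul_ne_zero (hak.1 _ _ _ hq1 hq2 hi' hl')
      (full _ (Int.emod_nonneg _ hm.ne') (Int.emod_lt_of_pos _ hm))
  · intro n hn
    rw [comp_apply' hm a b hbw] at hn ⊢
    rw [mul_pow, hak.2 _ (left_ne_zero_of_mul hn), hbk.2 _ (right_ne_zero_of_mul hn), one_mul]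

lemma comp_len {m : ℤ} (hm : 0 < m) {a b : LaurentPolynomial ℂ}
    (ha0 : a ≠ 0) (hb0 : b ≠ 0) (hbm : len b = m) :
    len (subst m a * b) = len a * m := by
  rw [len_mul (subst_ne_zero hm.ne' ha0) hb0, len_subst hm ha0, hbm]
  ring

lemma lconj_comp {m : ℤ} (hm : 0 < m) (a b : LaurentPolynomial ℂ) :
    lconj (subst m a * b) = subst m (lconj a) * lconj b := by
  rw [lconj_mul, lconj_subst hm.ne']

lemma equi_comp {m : ℤ} (hm : 0 < m) {a b c d : LaurentPolynomial ℂ}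
    (hac : Equicorrelational a c) (hbd : Equicorrelational b d) :
    Equicorrelational (subst m a * b) (subst m c * d) := by
  obtain ⟨c1, hc1, e1⟩ := hac
  obtain ⟨c2, hc2, e2⟩ := hbd
  refine ⟨c1 * c2, mul_pos hc1 hc2, ?_⟩
  have expand : ∀ x y : LaurentPolynomial ℂ,
      (subst m x * y) * lconj (subst m x * y) = subst m (x * lconj x) * (y * lconj y) := by
    intro x y
    rw [lconj_mul, lconj_subst hm.ne', subst_mul]
    ring
  rw [expand, expand, e1, e2, subst_mul, subst_C m ((c1 : ℂ)),
    show ((↑(c1 * c2) : ℂ)) = (c1 : ℂ) * (c2 : ℂ) by push_cast; ring, map_mul]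
  ring

/-- core uniqueness lemma -/
lemma main_core {m : ℤ} (hm : 0 < m) {a b c d : LaurentPolynomial ℂ}
    (ha0 : a ≠ 0) (hb0 : b ≠ 0) (hc0 : c ≠ 0) (hd0 : d ≠ 0)
    (hbm : len b = m) (hdm : len d = m)
    (h : Associated (subst m c * d) (subst m a * b)) :
    Associated a c ∧ Associated b d := by
  obtain ⟨u, hu⟩ := h
  obtain ⟨α, n, hα, huv⟩ := unit_form u.isUnit
  have hbw := window_of_len hb0 hbm
  have hdw := window_of_len hd0 hdm
  have hg0 : subst m c * d ≠ 0 := mul_ne_zero' (subst_ne_zero hm.ne' hc0) hd0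
  have hmnf : mn (subst m a * b) = m * mn a + mn b := by
    rw [mn_mul (subst_ne_zero hm.ne' ha0) hb0, mn_subst hm ha0]
  have hmng : mn (subst m c * d) = m * mn c + mn d := by
    rw [mn_mul (subst_ne_zero hm.ne' hc0) hd0, mn_subst hm hc0]
  have hthis : mn ((subst m c * d) * (u : LaurentPolynomial ℂ)) = mn (subst m a * b) := by
    rw [hu]
  rw [mn_mul hg0 (by rw [huv]; exact sg_ne_zero hα n), huv, mn_sg hα] at hthis
  set s : ℤ := mn a - mn c with hs
  set t : ℤ := mn b - mn d with ht
  have hn : m * s + t = n := by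
    rw [hs, ht]
    have e1 : m * (mn a - mn c) = m * mn a - m * mn c := by ring
    rw [e1]
    linarith [hthis, hmnf, hmng]
  have key : ∀ p : ℤ, (subst m a * b).coeff p = (subst m c * d).coeff (p - n) * α := by
    intro p
    rw [← hu, huv]
    exact mul_single_apply' (subst m c * d) α n p
  have ha1 : a.coeff (mn a) ≠ 0 := apply_mn_ne_zero ha0
  have hb1 : b.coeff (mn b) ≠ 0 := apply_mn_ne_zero hb0
  have hc1 : c.coeff (mn c) ≠ 0 := apply_mn_ne_zero hc0
  have hd1 : d.coeff (mn d) ≠ 0 := apply_mn_ne_zero hd0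
  have keyA : ∀ i : ℤ, a.coeff i * b.coeff (mn b) = c.coeff (i - s) * d.coeff (mn d) * α := by
    intro i
    have h1 := key (m * i + mn b)
    rw [comp_apply hm a b hbw i (mn b) le_rfl (by omega)] at h1
    have harg : m * i + mn b - n = m * (i - s) + mn d := by
      rw [← hn, ht]; ring
    rw [harg, comp_apply hm c d hdw (i - s) (mn d) le_rfl (by omega)] at h1
    exact h1
  have keyB : ∀ j : ℤ, mn b ≤ j → j < mn b + m →
      a.coeff (mn a) * b.coeff j = c.coeff (mn c) * d.coeff (j - t) * α := by
    intro j hj1 hj2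
    have h1 := key (m * mn a + j)
    rw [comp_apply hm a b hbw (mn a) j hj1 hj2] at h1
    have harg : m * mn a + j - n = m * mn c + (j - t) := by
      rw [← hn, hs]; ring
    rw [harg, comp_apply hm c d hdw (mn c) (j - t) (by omega) (by omega)] at h1
    exact h1
  constructor
  · set β : ℂ := d.coeff (mn d) * α * (b.coeff (mn b))⁻¹ with hβ
    have hβ0 : β ≠ 0 := mul_ne_zero (mul_ne_zero hd1 hα) (inv_ne_zero hb1)
    have ha_eq : a = sg s β * c := by
      ext i
      rw [single_mul_apply' β s c i, hβ]
      field_simp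
      linear_combination keyA i
    have hu1 : IsUnit (sg s β) := isUnit_single hβ0 s
    exact Associated.symm (show Associated c a from ⟨hu1.unit, by rw [IsUnit.unit_spec, ha_eq]; ring⟩)
  · set γ : ℂ := c.coeff (mn c) * α * (a.coeff (mn a))⁻¹ with hγ
    have hγ0 : γ ≠ 0 := mul_ne_zero (mul_ne_zero hc1 hα) (inv_ne_zero ha1)
    have hb_eq : b = sg t γ * d := by
      ext j
      rw [single_mul_apply' γ t d j, hγ]
      by_cases hcase : mn b ≤ j ∧ j < mn b + m
      · field_simp
        linear_combination keyB j hcase.1 hcase.2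
      · have hbj : b.coeff j = 0 := by
          by_contra hbj
          exact hcase (hbw j hbj)
        have hdj : d.coeff (j - t) = 0 := by
          by_contra hdj
          have := hdw _ hdj
          omega
        rw [hbj, hdj, mul_zero]
    have hu1 : IsUnit (sg t γ) := isUnit_single hγ0 t
    exact Associated.symm (show Associated d b from ⟨hu1.unit, by rw [IsUnit.unit_spec, hb_eq]; ring⟩)

-- block 6
lemma assoc_comp {m : ℤ} (hm : 0 < m) {a b c d : LaurentPolynomial ℂ}
    (h1 : Associated a c) (h2 : Associated b d) :
    Associated (subst m c * d) (subst m a * b) := by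
  obtain ⟨u, hu⟩ := h1
  obtain ⟨v, hv⟩ := h2
  have hw : IsUnit (subst m (u : LaurentPolynomial ℂ) * (v : LaurentPolynomial ℂ)) :=
    (u.isUnit.map (AddMonoidAlgebra.mapDomainRingHom ℂ (AddMonoidHom.mulLeft m))).mul v.isUnit
  refine Associated.symm
    (show Associated (subst m a * b) (subst m c * d) from ⟨hw.unit, ?_⟩)
  rw [IsUnit.unit_spec, ← hu, ← hv, subst_mul]
  ring

lemma triv_from {x y : LaurentPolynomial ℂ}
    (h : Associated x y ∨ Associated x (lconj y)) : TrivEquicorrelational x y := by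
  rcases h with h | h
  · exact Or.inl h.symm
  · refine Or.inr ?_
    have h2 := assoc_lconj h
    rw [lconj_lconj] at h2
    exact h2.symm


theorem stmt18 (k l m : ℕ) (hk : 0 < k) (hl : 0 < l) (hm : 0 < m)
    (a b c d : LaurentPolynomial ℂ)
    (hak : IsKary k a) (hck : IsKary k c) (hbk : IsKary k b) (hdk : IsKary k d)
    (hal : len a = (l : ℤ)) (hcl : len c = (l : ℤ))
    (hbm : len b = (m : ℤ)) (hdm : len d = (m : ℤ))
    (hac : Equicorrelational a c) (hbd : Equicorrelational b d) :
    IsKary k (subst (m : ℤ) a * b) ∧ IsKary k (subst (m : ℤ) c * d) ∧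
    len (subst (m : ℤ) a * b) = (l : ℤ) * m ∧
    len (subst (m : ℤ) c * d) = (l : ℤ) * m ∧
    Equicorrelational (subst (m : ℤ) a * b) (subst (m : ℤ) c * d) ∧
    (TrivEquicorrelational (subst (m : ℤ) a * b) (subst (m : ℤ) c * d) ↔
      (Associated a c ∧ Associated b d) ∨
      (Associated a (lconj c) ∧ Associated b (lconj d))) ∧
    (((Equicorrelational a c ∧ ¬ TrivEquicorrelational a c) ∨
        (Equicorrelational b d ∧ ¬ TrivEquicorrelational b d)) →
      (Equicorrelational (subst (m : ℤ) a * b) (subst (m : ℤ) c * d) ∧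
        ¬ TrivEquicorrelational (subst (m : ℤ) a * b) (subst (m : ℤ) c * d))) := by
  have hmz : (0 : ℤ) < (m : ℤ) := by exact_mod_cast hm
  have hlz : (0 : ℤ) < (l : ℤ) := by exact_mod_cast hl
  have ha0 : a ≠ 0 := ne_zero_of_len hal hlz
  have hc0 : c ≠ 0 := ne_zero_of_len hcl hlz
  have hb0 : b ≠ 0 := ne_zero_of_len hbm hmz
  have hd0 : d ≠ 0 := ne_zero_of_len hdm hmz
  have hla0 : lconj a ≠ 0 := fun h => ha0 (lconj_eq_zero.mp h)
  have hlb0 : lconj b ≠ 0 := fun h => hb0 (lconj_eq_zero.mp h)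
  have P1 : IsKary k (subst (m : ℤ) a * b) := comp_isKary hmz ha0 hb0 hak hbk hbm
  have P2 : IsKary k (subst (m : ℤ) c * d) := comp_isKary hmz hc0 hd0 hck hdk hdm
  have P3 : len (subst (m : ℤ) a * b) = (l : ℤ) * m := by
    rw [comp_len hmz ha0 hb0 hbm, hal]
  have P4 : len (subst (m : ℤ) c * d) = (l : ℤ) * m := by
    rw [comp_len hmz hc0 hd0 hdm, hcl]
  have P5 : Equicorrelational (subst (m : ℤ) a * b) (subst (m : ℤ) c * d) :=
    equi_comp hmz hac hbd
  have P6 : TrivEquicorrelational (subst (m : ℤ) a * b) (subst (m : ℤ) c * d) ↔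
      (Associated a c ∧ Associated b d) ∨
      (Associated a (lconj c) ∧ Associated b (lconj d)) := by
    constructor
    · rintro (h | h)
      · exact Or.inl (main_core hmz ha0 hb0 hc0 hd0 hbm hdm h)
      · rw [lconj_comp hmz] at h
        obtain ⟨q1, q2⟩ := main_core hmz hla0 hlb0 hc0 hd0
          (by rw [len_lconj hb0]; exact hbm) hdm h
        refine Or.inr ⟨?_, ?_⟩
        · have h2 := assoc_lconj q1
          rwa [lconj_lconj] at h2
        · have h2 := assoc_lconj q2
          rwa [lconj_lconj] at h2
    · rintro (⟨h1, h2⟩ | ⟨h1, h2⟩)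
      · exact Or.inl (assoc_comp hmz h1 h2)
      · right
        rw [lconj_comp hmz]
        refine assoc_comp hmz ?_ ?_
        · have h3 := assoc_lconj h1
          rwa [lconj_lconj] at h3
        · have h3 := assoc_lconj h2
          rwa [lconj_lconj] at h3
  refine ⟨P1, P2, P3, P4, P5, P6, ?_⟩
  rintro (⟨_, hnt⟩ | ⟨_, hnt⟩) <;> refine ⟨P5, fun htr => ?_⟩
  · rcases P6.mp htr with ⟨h1, _⟩ | ⟨h1, _⟩
    · exact hnt (triv_from (Or.inl h1))
    · exact hnt (triv_from (Or.inr h1))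
  · rcases P6.mp htr with ⟨_, h2⟩ | ⟨_, h2⟩
    · exact hnt (triv_from (Or.inl h2))
    · exact hnt (triv_from (Or.inr h2))
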